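/- For the category of partitions C = ⟨⨯, ⊓⊓⟩ generated by the crossing partition and the four block partition, F(C) equals the commutator subgroup of Z_2^{*∞}; in particular the quotient Z_2^{*∞}/F(C) is isomorphic to the direct sum of countably many copies of Z_2. -/

import Mathlib

open Classical

/-- A partition diagram with `upper` upper points and `lower` lower points; the blocks are
encoded by the equivalence relation (setoid) on the disjoint union of the points. -/
structure PartitionDiagram where
  upper : ℕ
  lower : ℕ
  rel : Setoid (Fin upper ⊕ Fin lower)

namespace PartitionDiagram

/-- The partition determined by a labelling of the points: two points lie in the same block
iff they receive the same label. -/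
def ofLabels {u l : ℕ} (f : Fin u ⊕ Fin l → ℕ) : PartitionDiagram :=
  ⟨u, l, Setoid.ker f⟩

/-- The identity partition `| ∈ P(1,1)`. -/
def idPartition : PartitionDiagram := ofLabels (u := 1) (l := 1) fun _ => 0

/-- The pair partition `⊓ ∈ P(0,2)`. -/
def pairPartition : PartitionDiagram := ofLabels (u := 0) (l := 2) fun _ => 0

/-- The four block partition `⊓⊓ ∈ P(0,4)`. -/
def fourBlock : PartitionDiagram := ofLabels (u := 0) (l := 4) fun _ => 0

/-- The singleton partition `↑ ∈ P(0,1)`. -/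
def singletonPartition : PartitionDiagram := ofLabels (u := 0) (l := 1) fun _ => 0

/-- The double singleton partition `↑⊗↑ ∈ P(0,2)`. -/
def doubleSingleton : PartitionDiagram :=
  ofLabels (u := 0) (l := 2) (Sum.elim (fun i => (i : ℕ)) fun j => (j : ℕ))

/-- The crossing partition `⨯ ∈ P(2,2)`, with blocks `{1,2'}` and `{2,1'}`. -/
def crossing : PartitionDiagram :=
  ofLabels (u := 2) (l := 2) (Sum.elim (fun i => (i : ℕ)) fun j => 1 - (j : ℕ))

/-- The pair positioner partition `▷ ∈ P(3,3)`, with blocks `{1,2,2',3'}` and `{3,1'}`. -/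
def pairPositioner : PartitionDiagram :=
  ofLabels (u := 3) (l := 3)
    (Sum.elim (fun i => if (i : ℕ) = 2 then 1 else 0) fun j => if (j : ℕ) = 0 then 1 else 0)

/-- The partition `k_l ∈ P(l+2, l+2)` consisting of the four block `{1, 1', l+2, (l+2)'}`
together with the pairs `{j, j'}` for `2 ≤ j ≤ l+1`. -/
def kPart (n : ℕ) : PartitionDiagram :=
  ofLabels (u := n + 2) (l := n + 2)
    (fun x => if (Sum.elim Fin.val Fin.val x) = 0 ∨ (Sum.elim Fin.val Fin.val x) = n + 1
      then 0 else Sum.elim Fin.val Fin.val x)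

/-- The involution `p* ∈ P(l,k)` of `p ∈ P(k,l)`: turn the partition upside down. -/
def invol (p : PartitionDiagram) : PartitionDiagram :=
  ⟨p.lower, p.upper, Setoid.comap Sum.swap p.rel⟩

/-- Auxiliary map splitting the points of a tensor product into the points of the two factors. -/
def splitPoint {a b c d : ℕ} (x : Fin (a + b) ⊕ Fin (c + d)) :
    (Fin a ⊕ Fin c) ⊕ (Fin b ⊕ Fin d) :=
  match x with
  | Sum.inl u =>
    match finSumFinEquiv.symm u with
    | Sum.inl i => Sum.inl (Sum.inl i)
    | Sum.inr i => Sum.inr (Sum.inl i)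
  | Sum.inr v =>
    match finSumFinEquiv.symm v with
    | Sum.inl j => Sum.inl (Sum.inr j)
    | Sum.inr j => Sum.inr (Sum.inr j)

/-- The tensor product (horizontal concatenation) `p ⊗ q` of two partitions. -/
def tensor (p q : PartitionDiagram) : PartitionDiagram :=
  ⟨p.upper + q.upper, p.lower + q.lower,
    Setoid.ker fun x =>
      Sum.map (Quotient.mk p.rel) (Quotient.mk q.rel) (splitPoint x)⟩

section Composition

variable (p q : PartitionDiagram) (h : p.lower = q.upper)

/-- Inclusion of the points of `p` into the three-row diagram used for composition. -/
def iotaP : Fin p.upper ⊕ Fin p.lower → Fin p.upper ⊕ (Fin p.lower ⊕ Fin q.lower) :=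
  Sum.map id Sum.inl

/-- Inclusion of the points of `q` into the three-row diagram used for composition,
identifying the upper points of `q` with the lower points of `p`. -/
def iotaQ : Fin q.upper ⊕ Fin q.lower → Fin p.upper ⊕ (Fin p.lower ⊕ Fin q.lower) :=
  fun x => Sum.inr (Sum.map (Fin.cast h.symm) id x)

/-- The generating relation on the three-row diagram used for composition. -/
def compRel : Fin p.upper ⊕ (Fin p.lower ⊕ Fin q.lower) →
    Fin p.upper ⊕ (Fin p.lower ⊕ Fin q.lower) → Prop :=
  fun x y =>
    (∃ a b, p.rel.r a b ∧ x = iotaP p q a ∧ y = iotaP p q b) ∨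
    (∃ a b, q.rel.r a b ∧ x = iotaQ p q h a ∧ y = iotaQ p q h b)

/-- The composition (vertical concatenation) `qp ∈ P(k,m)` of `p ∈ P(k,l)` and `q ∈ P(l,m)`:
identify the lower points of `p` with the upper points of `q`, take the join of the block
structures and restrict to the upper points of `p` and the lower points of `q`. -/
def comp : PartitionDiagram :=
  ⟨p.upper, q.lower,
    Setoid.comap (Sum.map id Sum.inr) (Relation.EqvGen.setoid (compRel p q h))⟩

end Composition

/-- Rotation of the leftmost upper point to the leftmost lower position. -/
def rotLU (p : PartitionDiagram) (h : 0 < p.upper) : PartitionDiagram :=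
  ⟨p.upper - 1, p.lower + 1,
    Setoid.comap (fun x => match x with
      | Sum.inl j => Sum.inl (⟨(j : ℕ) + 1, by have := j.isLt; omega⟩ : Fin p.upper)
      | Sum.inr j => if hj : (j : ℕ) = 0 then Sum.inl (⟨0, h⟩ : Fin p.upper)
          else Sum.inr (⟨(j : ℕ) - 1, by have := j.isLt; omega⟩ : Fin p.lower)) p.rel⟩

/-- Rotation of the leftmost lower point to the leftmost upper position. -/
def rotLD (p : PartitionDiagram) (h : 0 < p.lower) : PartitionDiagram :=
  ⟨p.upper + 1, p.lower - 1,
    Setoid.comap (fun x => match x with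
      | Sum.inl j => if hj : (j : ℕ) = 0 then Sum.inr (⟨0, h⟩ : Fin p.lower)
          else Sum.inl (⟨(j : ℕ) - 1, by have := j.isLt; omega⟩ : Fin p.upper)
      | Sum.inr j => Sum.inr (⟨(j : ℕ) + 1, by have := j.isLt; omega⟩ : Fin p.lower)) p.rel⟩

/-- Rotation of the rightmost upper point to the rightmost lower position. -/
def rotRU (p : PartitionDiagram) (h : 0 < p.upper) : PartitionDiagram :=
  ⟨p.upper - 1, p.lower + 1,
    Setoid.comap (fun x => match x with
      | Sum.inl j => Sum.inl (⟨(j : ℕ), by have := j.isLt; omega⟩ : Fin p.upper)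
      | Sum.inr j => if hj : (j : ℕ) < p.lower then Sum.inr (⟨(j : ℕ), hj⟩ : Fin p.lower)
          else Sum.inl (⟨p.upper - 1, by omega⟩ : Fin p.upper)) p.rel⟩

/-- Rotation of the rightmost lower point to the rightmost upper position. -/
def rotRD (p : PartitionDiagram) (h : 0 < p.lower) : PartitionDiagram :=
  ⟨p.upper + 1, p.lower - 1,
    Setoid.comap (fun x => match x with
      | Sum.inl j => if hj : (j : ℕ) < p.upper then Sum.inl (⟨(j : ℕ), hj⟩ : Fin p.upper)
          else Sum.inr (⟨p.lower - 1, by omega⟩ : Fin p.lower)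
      | Sum.inr j => Sum.inr (⟨(j : ℕ), by have := j.isLt; omega⟩ : Fin p.lower)) p.rel⟩

/-- The partition obtained from `p` by merging the block of the point `a` and the block of
the point `b` into a single block, leaving all other blocks unchanged. -/
noncomputable def mergeBlocks (p : PartitionDiagram)
    (a b : Fin p.upper ⊕ Fin p.lower) : PartitionDiagram :=
  ⟨p.upper, p.lower,
    Setoid.ker fun x =>
      if p.rel.r x a ∨ p.rel.r x b then (none : Option (Quotient p.rel))
      else some (Quotient.mk p.rel x)⟩

end PartitionDiagram

open PartitionDiagram

/-- A set of partitions is a category of partitions if it contains the identity partition and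
the pair partition and is closed under tensor products, composition, involution and the four
rotation operations. -/
structure IsPartitionCategory (M : Set PartitionDiagram) : Prop where
  id_mem : idPartition ∈ M
  pair_mem : pairPartition ∈ M
  tensor_mem : ∀ p ∈ M, ∀ q ∈ M, tensor p q ∈ M
  comp_mem : ∀ p ∈ M, ∀ q ∈ M, ∀ h : p.lower = q.upper, comp p q h ∈ M
  invol_mem : ∀ p ∈ M, invol p ∈ M
  rotLU_mem : ∀ p ∈ M, ∀ h : 0 < p.upper, rotLU p h ∈ M
  rotLD_mem : ∀ p ∈ M, ∀ h : 0 < p.lower, rotLD p h ∈ M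
  rotRU_mem : ∀ p ∈ M, ∀ h : 0 < p.upper, rotRU p h ∈ M
  rotRD_mem : ∀ p ∈ M, ∀ h : 0 < p.lower, rotRD p h ∈ M

/-- A category of partitions is group-theoretical if it contains the pair positioner
partition `▷`. -/
def IsGroupTheoreticalCategory (M : Set PartitionDiagram) : Prop :=
  IsPartitionCategory M ∧ pairPositioner ∈ M

/-- The smallest category of partitions containing a given set of partitions. -/
def generatedCategory (S : Set PartitionDiagram) : Set PartitionDiagram :=
  ⋂₀ { M | IsPartitionCategory M ∧ S ⊆ M }

/-- The group `Z_2^{*∞}`: the free product of countably many copies of the cyclic group of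
order two. -/
abbrev FreeZ2 := Monoid.CoprodI (fun _ : ℕ => Multiplicative (ZMod 2))

/-- The free generators `a_1, a_2, …` of `Z_2^{*∞}`, each of order two. -/
def gen (n : ℕ) : FreeZ2 :=
  Monoid.CoprodI.of (i := n) (Multiplicative.ofAdd (1 : ZMod 2))

/-- A labelling of a partition assigns (indices of) pairwise distinct generators of
`Z_2^{*∞}` to the blocks: two points receive the same label iff they lie in the same block. -/
def IsLabelling (p : PartitionDiagram) (lab : Fin p.upper ⊕ Fin p.lower → ℕ) : Prop :=
  ∀ x y, lab x = lab y ↔ p.rel.r x y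

/-- The word `w(p,l) ∈ Z_2^{*∞}` of a labelled partition: after rotating all upper points to
the right-hand end of the lower row, read off the generators assigned to the points from left
to right, i.e. read the lower points from left to right and then the upper points from right
to left. -/
def wordOf (p : PartitionDiagram) (lab : Fin p.upper ⊕ Fin p.lower → ℕ) : FreeZ2 :=
  ((List.ofFn fun j : Fin p.lower => gen (lab (Sum.inr j))) ++
    (List.ofFn fun i : Fin p.upper => gen (lab (Sum.inl i))).reverse).prod

/-- `F(C) ⊆ Z_2^{*∞}` is the set of all `w(p,l)` where `p ∈ C` and `l` is a labelling. -/
def Fmap (M : Set PartitionDiagram) : Set FreeZ2 :=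
  { g | ∃ p ∈ M, ∃ lab, IsLabelling p lab ∧ wordOf p lab = g }

/-- The set of partitions admitting a labelling whose word lies in `H`. -/
def catOf (H : Set FreeZ2) : Set PartitionDiagram :=
  { p | ∃ lab, IsLabelling p lab ∧ wordOf p lab ∈ H }

/-- The endomorphism of `Z_2^{*∞}` identifying letters according to `f`, i.e. sending
`a_k` to `a_{f k}` for every `k`. -/
def identifyLetters (f : ℕ → ℕ) : Monoid.End FreeZ2 :=
  Monoid.CoprodI.lift fun i =>
    (Monoid.CoprodI.of (M := fun _ : ℕ => Multiplicative (ZMod 2)) (i := f i))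

/-- The strong symmetric semigroup `sS_∞`: the subsemigroup of `End(Z_2^{*∞})` generated by
the finite identifications of letters. -/
def strongSymmetricSemigroup : Subsemigroup (Monoid.End FreeZ2) :=
  Subsemigroup.closure
    { φ | ∃ f : ℕ → ℕ, (∃ n : ℕ, ∀ k, n ≤ k → f k = k) ∧ φ = identifyLetters f }

/-- A subset of `Z_2^{*∞}` is `sS_∞`-invariant if it is preserved by every element of the
strong symmetric semigroup. -/
def IsSSInvariant (H : Set FreeZ2) : Prop :=
  ∀ φ ∈ strongSymmetricSemigroup, ∀ g ∈ H, φ g ∈ H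

/-- A partition is in single leg form if it has no upper points and no two consecutive
points belong to the same block. -/
def IsSingleLeg (p : PartitionDiagram) : Prop :=
  p.upper = 0 ∧
    ∀ i j : Fin p.lower, (j : ℕ) = (i : ℕ) + 1 → ¬ p.rel.r (Sum.inr i) (Sum.inr j)

/-- `C_sl`: the set of all partitions in `C` with no upper points in single leg form. -/
def slSet (M : Set PartitionDiagram) : Set PartitionDiagram :=
  { p ∈ M | IsSingleLeg p }

/-- The partition with no upper points determined by a word (a list of letters): two points
lie in the same block iff the corresponding letters coincide. -/
def wordPartition (w : List ℕ) : PartitionDiagram :=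
  ofLabels (u := 0) (l := w.length) (Sum.elim (fun i => (i : ℕ)) fun j => w.get j)

/-- The canonical letter of the block of a lower point: the least index of a point in its
block. -/
noncomputable def blockLabel (p : PartitionDiagram) (j : Fin p.lower) : ℕ :=
  sInf { i : ℕ | ∃ h : i < p.lower, p.rel.r (Sum.inr ⟨i, h⟩) (Sum.inr j) }

/-- The canonical word of a partition with no upper points. -/
noncomputable def canonWord (p : PartitionDiagram) : List ℕ :=
  List.ofFn fun j : Fin p.lower => blockLabel p j

/-- Full reduction of a word over an alphabet of involutions: repeatedly delete adjacent
equal pairs of letters.  This computes the result of iterating the operation replacing every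
exponent in the run-decomposition of the word by its parity. -/
def reduceWord (w : List ℕ) : List ℕ :=
  w.foldr (fun x acc => match acc with
    | [] => [x]
    | y :: rest => if x = y then rest else x :: y :: rest) []

/-- The single leg version of a partition with no upper points: the unique partition in
single leg form obtained by iteratively replacing every exponent in its run-decomposition by
its parity. -/
noncomputable def singleLegVersion (p : PartitionDiagram) : PartitionDiagram :=
  wordPartition (reduceWord (canonWord p))

namespace PartitionHelpers
open PartitionDiagram

/-! ### Basic infrastructure -/

def ptCast {u₁ l₁ u₂ l₂ : ℕ} (hu : u₁ = u₂) (hl : l₁ = l₂)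
    (x : Fin u₁ ⊕ Fin l₁) : Fin u₂ ⊕ Fin l₂ := Sum.map (Fin.cast hu) (Fin.cast hl) x

theorem pd_ext {u₁ l₁ u₂ l₂ : ℕ} {r₁ : Setoid (Fin u₁ ⊕ Fin l₁)} {r₂ : Setoid (Fin u₂ ⊕ Fin l₂)}
    (hu : u₁ = u₂) (hl : l₁ = l₂)
    (h : ∀ x y, r₁.r x y ↔ r₂.r (ptCast hu hl x) (ptCast hu hl y)) :
    (⟨u₁, l₁, r₁⟩ : PartitionDiagram) = ⟨u₂, l₂, r₂⟩ := by
  subst hu; subst hl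
  have : r₁ = r₂ := by
    apply Setoid.ext
    intro x y
    have hx : ptCast rfl rfl x = x := by cases x <;> rfl
    have hy : ptCast rfl rfl y = y := by cases y <;> rfl
    rw [show r₁.r x y ↔ r₁ x y from Iff.rfl] at *
    have := h x y
    rw [hx, hy] at this
    exact this
  rw [this]

theorem pd_ext' {u l : ℕ} {r₁ r₂ : Setoid (Fin u ⊕ Fin l)}
    (h : ∀ x y, r₁.r x y ↔ r₂.r x y) :
    (⟨u, l, r₁⟩ : PartitionDiagram) = ⟨u, l, r₂⟩ := by
  have : r₁ = r₂ := Setoid.ext h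
  rw [this]

/-! ### The generated category -/

abbrev gen : Set PartitionDiagram :=
  generatedCategory {PartitionDiagram.crossing, PartitionDiagram.fourBlock}

theorem gen_isCat : IsPartitionCategory gen := by
  constructor
  · intro M hM; exact hM.1.id_mem
  · intro M hM; exact hM.1.pair_mem
  · intro p hp q hq M hM; exact hM.1.tensor_mem p (hp M hM) q (hq M hM)
  · intro p hp q hq h M hM; exact hM.1.comp_mem p (hp M hM) q (hq M hM) h
  · intro p hp M hM; exact hM.1.invol_mem p (hp M hM)
  · intro p hp h M hM; exact hM.1.rotLU_mem p (hp M hM) h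
  · intro p hp h M hM; exact hM.1.rotLD_mem p (hp M hM) h
  · intro p hp h M hM; exact hM.1.rotRU_mem p (hp M hM) h
  · intro p hp h M hM; exact hM.1.rotRD_mem p (hp M hM) h

theorem crossing_mem_gen : PartitionDiagram.crossing ∈ gen := by
  intro M hM; exact hM.2 (Or.inl rfl)

theorem fourBlock_mem_gen : PartitionDiagram.fourBlock ∈ gen := by
  intro M hM; exact hM.2 (Or.inr rfl)

theorem gen_subset {M : Set PartitionDiagram} (hM : IsPartitionCategory M)
    (hc : PartitionDiagram.crossing ∈ M) (hf : PartitionDiagram.fourBlock ∈ M) :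
    gen ⊆ M := by
  intro p hp
  exact hp M ⟨hM, by rintro x (rfl | rfl) <;> assumption⟩

/-! ### splitPoint computations -/

theorem finSumFinEquiv_symm_lt {a b : ℕ} (u : Fin (a + b)) (h : (u : ℕ) < a) :
    finSumFinEquiv.symm u = Sum.inl ⟨u, h⟩ := by
  rw [Equiv.symm_apply_eq]
  exact Fin.ext rfl

theorem finSumFinEquiv_symm_ge {a b : ℕ} (u : Fin (a + b)) (h : a ≤ (u : ℕ)) :
    finSumFinEquiv.symm u = Sum.inr ⟨u - a, by omega⟩ := by
  rw [Equiv.symm_apply_eq]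
  exact Fin.ext (by simp [finSumFinEquiv]; omega)

theorem splitPoint_inl_lt {a b c d : ℕ} (u : Fin (a + b)) (h : (u : ℕ) < a) :
    splitPoint (a := a) (b := b) (c := c) (d := d) (Sum.inl u) = Sum.inl (Sum.inl ⟨u, h⟩) := by
  simp [splitPoint, finSumFinEquiv_symm_lt u h]

theorem splitPoint_inl_ge {a b c d : ℕ} (u : Fin (a + b)) (h : a ≤ (u : ℕ)) :
    splitPoint (a := a) (b := b) (c := c) (d := d) (Sum.inl u)
      = Sum.inr (Sum.inl ⟨u - a, by omega⟩) := by
  simp [splitPoint, finSumFinEquiv_symm_ge u h]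

theorem splitPoint_inr_lt {a b c d : ℕ} (v : Fin (c + d)) (h : (v : ℕ) < c) :
    splitPoint (a := a) (b := b) (c := c) (d := d) (Sum.inr v) = Sum.inl (Sum.inr ⟨v, h⟩) := by
  simp [splitPoint, finSumFinEquiv_symm_lt v h]

theorem splitPoint_inr_ge {a b c d : ℕ} (v : Fin (c + d)) (h : c ≤ (v : ℕ)) :
    splitPoint (a := a) (b := b) (c := c) (d := d) (Sum.inr v)
      = Sum.inr (Sum.inr ⟨v - c, by omega⟩) := by
  simp [splitPoint, finSumFinEquiv_symm_ge v h]

/-! ### tensor relation -/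

theorem tensor_rel_iff (p q : PartitionDiagram)
    (x y : Fin (p.upper + q.upper) ⊕ Fin (p.lower + q.lower)) :
    (tensor p q).rel.r x y ↔
      ((∃ a b, splitPoint x = Sum.inl a ∧ splitPoint y = Sum.inl b ∧ p.rel.r a b) ∨
       (∃ a b, splitPoint x = Sum.inr a ∧ splitPoint y = Sum.inr b ∧ q.rel.r a b)) := by
  show (Sum.map (Quotient.mk p.rel) (Quotient.mk q.rel) (splitPoint x) =
        Sum.map (Quotient.mk p.rel) (Quotient.mk q.rel) (splitPoint y)) ↔ _
  cases hx : splitPoint x <;> cases hy : splitPoint y <;>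
    simp [Sum.map, Quotient.eq, hx, hy] <;>
    exact ⟨Quotient.exact, Quotient.sound⟩

end PartitionHelpers
namespace PartitionHelpers
open PartitionDiagram

/-! ### graph partitions and composition -/

def graphP (m n : ℕ) (σ : Fin n → Fin m) : PartitionDiagram :=
  ofLabels (u := m) (l := n) (Sum.elim Fin.val (fun j => (σ j : ℕ)))

section CompGraph

variable (p : PartitionDiagram) {n : ℕ} (σ : Fin n → Fin p.lower)

private def Fq : Fin p.upper ⊕ (Fin p.lower ⊕ Fin n) → Fin p.upper ⊕ Fin p.lower
  | .inl u => .inl u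
  | .inr (.inl m) => .inr m
  | .inr (.inr j) => .inr (σ j)

private theorem eqvGen_iff (z w : Fin p.upper ⊕ (Fin p.lower ⊕ Fin n)) :
    Relation.EqvGen (compRel p (graphP p.lower n σ) rfl) z w ↔
      (Quotient.mk p.rel (Fq p σ z) = Quotient.mk p.rel (Fq p σ w)) := by
  have hiotaP : ∀ a : Fin p.upper ⊕ Fin p.lower,
      Fq p σ (iotaP p (graphP p.lower n σ) a) = a := by
    rintro (u | m) <;> rfl
  have hiotaQ : ∀ a : Fin p.lower ⊕ Fin n,
      Fq p σ (iotaQ p (graphP p.lower n σ) rfl a) = Sum.inr (Sum.elim id σ a) := by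
    rintro (m | j) <;> rfl
  have hlabel : ∀ a : Fin p.lower ⊕ Fin n,
      Sum.elim Fin.val (fun j => ((σ j : Fin p.lower) : ℕ)) a = ((Sum.elim id σ a : Fin p.lower) : ℕ) := by
    rintro (m | j) <;> rfl
  constructor
  · intro h
    induction h with
    | rel x y hxy =>
        rcases hxy with ⟨a, b, hab, rfl, rfl⟩ | ⟨a, b, hab, rfl, rfl⟩
        · rw [hiotaP, hiotaP]; exact Quotient.sound hab
        · refine Eq.trans (congrArg (Quotient.mk p.rel) (hiotaQ a))
            (Eq.trans ?_ (congrArg (Quotient.mk p.rel) (hiotaQ b)).symm)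
          have hval : Sum.elim Fin.val (fun j => ((σ j : Fin p.lower) : ℕ)) a
              = Sum.elim Fin.val (fun j => ((σ j : Fin p.lower) : ℕ)) b := hab
          have h2 : (Sum.elim id σ a : Fin p.lower) = Sum.elim id σ b :=
            Fin.ext ((hlabel a).symm.trans (hval.trans (hlabel b)))
          rw [h2]
    | refl x => rfl
    | symm _ _ _ ih => exact ih.symm
    | trans _ _ _ _ _ ih1 ih2 => exact ih1.trans ih2
  · intro h
    have hrel : p.rel.r (Fq p σ z) (Fq p σ w) := Quotient.exact h
    have hstep : ∀ a b, p.rel.r a b →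
        Relation.EqvGen (compRel p (graphP p.lower n σ) rfl)
          (iotaP p (graphP p.lower n σ) a) (iotaP p (graphP p.lower n σ) b) := by
      intro a b hab
      exact Relation.EqvGen.rel _ _ (Or.inl ⟨a, b, hab, rfl, rfl⟩)
    have hA : ∀ t, Relation.EqvGen (compRel p (graphP p.lower n σ) rfl)
        t (iotaP p (graphP p.lower n σ) (Fq p σ t)) := by
      rintro (u | (m | j))
      · exact Relation.EqvGen.refl _
      · exact Relation.EqvGen.refl _
      · refine Relation.EqvGen.rel _ _ (Or.inr ⟨Sum.inr j, Sum.inl (σ j), rfl, rfl, rfl⟩)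
    exact ((hA z).trans _ _ _ ((hstep _ _ hrel).trans _ _ _
      (Relation.EqvGen.symm _ _ (hA w))))

theorem comp_graphP :
    comp p (graphP p.lower n σ) rfl =
      ⟨p.upper, n, Setoid.ker (Sum.elim (fun i => Quotient.mk p.rel (Sum.inl i))
        (fun j => Quotient.mk p.rel (Sum.inr (σ j))))⟩ := by
  show (⟨p.upper, n, Setoid.comap (Sum.map id Sum.inr)
      (Relation.EqvGen.setoid (compRel p (graphP p.lower n σ) rfl))⟩ : PartitionDiagram) = _
  apply pd_ext' (u := p.upper) (l := n)
  intro x y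
  show Relation.EqvGen (compRel p (graphP p.lower n σ) rfl) _ _ ↔ _
  rw [eqvGen_iff]
  have hx : ∀ z : Fin p.upper ⊕ Fin n, Fq p σ (Sum.map id Sum.inr z)
      = Sum.elim Sum.inl (fun j => Sum.inr (σ j)) z := by rintro (i | j) <;> rfl
  rw [hx, hx]
  cases x <;> cases y <;> exact Iff.rfl

end CompGraph

/-! ### word partitions as functions -/

def wpF (n : ℕ) (f : Fin n → ℕ) : PartitionDiagram :=
  ofLabels (u := 0) (l := n) (Sum.elim (fun i => (i : ℕ)) f)

theorem wordPartition_eq_wpF (w : List ℕ) : wordPartition w = wpF w.length w.get := rfl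

theorem wpF_rel_iff {n : ℕ} (f : Fin n → ℕ) (i j : Fin n) :
    (wpF n f).rel.r (Sum.inr i) (Sum.inr j) ↔ f i = f j := Iff.rfl

theorem wpF_congr_ker {n : ℕ} {f g : Fin n → ℕ}
    (h : ∀ i j, f i = f j ↔ g i = g j) : wpF n f = wpF n g := by
  apply pd_ext' (u := 0) (l := n)
  rintro (i | i) (j | j)
  · exact i.elim0
  · exact i.elim0
  · exact j.elim0
  · exact h i j

theorem wpF_cast {n m : ℕ} (h : n = m) (f : Fin n → ℕ) :
    wpF n f = wpF m (f ∘ Fin.cast h.symm) := by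
  apply pd_ext (u₁ := 0) (l₁ := n) rfl h
  rintro (i | i) (j | j)
  · exact i.elim0
  · exact i.elim0
  · exact j.elim0
  · exact Iff.rfl

theorem comp_wpF_graphP {n n' : ℕ} (f : Fin n → ℕ) (σ : Fin n' → Fin n) :
    comp (wpF n f) (graphP n n' σ) rfl = wpF n' (f ∘ σ) := by
  refine Eq.trans (comp_graphP (wpF n f) σ) ?_
  apply pd_ext' (u := 0) (l := n')
  rintro (i | i) (j | j)
  · exact i.elim0
  · exact i.elim0
  · exact j.elim0
  · show Quotient.mk _ _ = Quotient.mk _ _ ↔ _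
    rw [Quotient.eq]
    exact Iff.rfl

end PartitionHelpers
namespace PartitionHelpers
open PartitionDiagram

theorem ptCast_rfl {u l : ℕ} (x : Fin u ⊕ Fin l) : ptCast rfl rfl x = x := by
  cases x <;> rfl

theorem pd_ext_gen (p q : PartitionDiagram) (hu : p.upper = q.upper) (hl : p.lower = q.lower)
    (h : ∀ x y, p.rel.r x y ↔ q.rel.r (ptCast hu hl x) (ptCast hu hl y)) : p = q := by
  obtain ⟨u₁, l₁, r₁⟩ := p
  obtain ⟨u₂, l₂, r₂⟩ := q
  exact pd_ext hu hl h

theorem ofLabels_eq {u l u' l' : ℕ} (hu : u = u') (hl : l = l')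
    (f : Fin u ⊕ Fin l → ℕ) (g : Fin u' ⊕ Fin l' → ℕ)
    (h : ∀ x y, f x = f y ↔ g (ptCast hu hl x) = g (ptCast hu hl y)) :
    ofLabels f = ofLabels g :=
  pd_ext hu hl h

/-- Tensor relation via labels, when the two label sets are disjoint. -/
theorem tensor_rel_labels (p q : PartitionDiagram)
    (fp : Fin p.upper ⊕ Fin p.lower → ℕ) (fq : Fin q.upper ⊕ Fin q.lower → ℕ)
    (hp : ∀ a b, p.rel.r a b ↔ fp a = fp b) (hq : ∀ a b, q.rel.r a b ↔ fq a = fq b)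
    (hdisj : ∀ a b, fp a ≠ fq b)
    (x y : Fin (p.upper + q.upper) ⊕ Fin (p.lower + q.lower)) :
    (tensor p q).rel.r x y ↔
      Sum.elim fp fq (splitPoint x) = Sum.elim fp fq (splitPoint y) := by
  rw [tensor_rel_iff]
  cases hx : splitPoint x <;> cases hy : splitPoint y <;> simp
  · exact hp _ _
  · exact fun h => hdisj _ _ h
  · exact fun h => hdisj _ _ h.symm
  · exact hq _ _

theorem tensor_eq_ofLabels (p q : PartitionDiagram)
    (fp : Fin p.upper ⊕ Fin p.lower → ℕ) (fq : Fin q.upper ⊕ Fin q.lower → ℕ)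
    (hp : ∀ a b, p.rel.r a b ↔ fp a = fp b) (hq : ∀ a b, q.rel.r a b ↔ fq a = fq b)
    (hdisj : ∀ a b, fp a ≠ fq b)
    (F : Fin (p.upper + q.upper) ⊕ Fin (p.lower + q.lower) → ℕ)
    (hF : ∀ z, F z = Sum.elim fp fq (splitPoint z)) :
    tensor p q = ofLabels F := by
  refine pd_ext_gen (tensor p q) (ofLabels F) rfl rfl ?_
  intro x y
  refine (tensor_rel_labels p q fp fq hp hq hdisj x y).trans ?_
  show _ ↔ F (ptCast rfl rfl x) = F (ptCast rfl rfl y)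
  exact Iff.of_eq (congrArg₂ (· = ·)
    ((congrArg (fun z => Sum.elim fp fq (splitPoint z)) (ptCast_rfl x).symm).trans (hF _).symm)
    ((congrArg (fun z => Sum.elim fp fq (splitPoint z)) (ptCast_rfl y).symm).trans (hF _).symm))

def combineσ {m n k k' : ℕ} (σ : Fin n → Fin m) (τ : Fin k' → Fin k) :
    Fin (n + k') → Fin (m + k) := fun j =>
  if h : (j : ℕ) < n then ⟨(σ ⟨j, h⟩ : ℕ), by have := (σ ⟨j, h⟩).isLt; omega⟩
  else ⟨m + (τ ⟨(j : ℕ) - n, by have := j.isLt; omega⟩ : ℕ),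
    by have := (τ ⟨(j : ℕ) - n, by have := j.isLt; omega⟩).isLt; omega⟩

theorem graphP_rel_iff {m n : ℕ} (σ : Fin n → Fin m) (x y : Fin m ⊕ Fin n) :
    (graphP m n σ).rel.r x y ↔
      Sum.elim Fin.val (fun j => ((σ j : Fin m) : ℕ)) x
        = Sum.elim Fin.val (fun j => ((σ j : Fin m) : ℕ)) y := Iff.rfl

theorem tensor_graphP {m n k k' : ℕ} (σ : Fin n → Fin m) (τ : Fin k' → Fin k) :
    tensor (graphP m n σ) (graphP k k' τ) = graphP (m + k) (n + k') (combineσ σ τ) := by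
  have hp : ∀ a b : Fin m ⊕ Fin n, (graphP m n σ).rel.r a b ↔
      Sum.elim Fin.val (fun j => ((σ j : Fin m) : ℕ)) a
        = Sum.elim Fin.val (fun j => ((σ j : Fin m) : ℕ)) b := fun a b => Iff.rfl
  have hq : ∀ a b : Fin k ⊕ Fin k', (graphP k k' τ).rel.r a b ↔
      (m + Sum.elim Fin.val (fun j => ((τ j : Fin k) : ℕ)) a)
        = (m + Sum.elim Fin.val (fun j => ((τ j : Fin k) : ℕ)) b) := by
    intro a b
    rw [graphP_rel_iff]
    omega
  have hd : ∀ (a : Fin m ⊕ Fin n) (b : Fin k ⊕ Fin k'),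
      Sum.elim Fin.val (fun j => ((σ j : Fin m) : ℕ)) a
        ≠ m + Sum.elim Fin.val (fun j => ((τ j : Fin k) : ℕ)) b := by
    intro a b
    have : Sum.elim Fin.val (fun j => ((σ j : Fin m) : ℕ)) a < m := by
      cases a with
      | inl i => exact i.isLt
      | inr j => exact (σ j).isLt
    omega
  have hF : ∀ z : Fin (m + k) ⊕ Fin (n + k'),
      Sum.elim Fin.val (fun j => ((combineσ σ τ j : Fin (m + k)) : ℕ)) z
      = Sum.elim (Sum.elim Fin.val (fun j => ((σ j : Fin m) : ℕ)))
          (fun b => m + Sum.elim Fin.val (fun j => ((τ j : Fin k) : ℕ)) b)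
          (splitPoint z) := by
    rintro (u | v)
    · by_cases h : (u : ℕ) < m
      · rw [splitPoint_inl_lt u h]; rfl
      · rw [splitPoint_inl_ge u (by omega)]
        simp only [Sum.elim_inl, Sum.elim_inr]
        omega
    · by_cases h : (v : ℕ) < n
      · rw [splitPoint_inr_lt v h]
        simp only [Sum.elim_inl, Sum.elim_inr, combineσ, h, dif_pos]
      · rw [splitPoint_inr_ge v (by omega)]
        simp only [Sum.elim_inl, Sum.elim_inr, combineσ, h, dif_neg, not_false_iff]
  exact tensor_eq_ofLabels (graphP m n σ) (graphP k k' τ) _ _ hp hq hd _ hF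

theorem graphP_congr {m n : ℕ} {σ τ : Fin n → Fin m} (h : ∀ j, σ j = τ j) :
    graphP m n σ = graphP m n τ := by
  rw [show σ = τ from funext h]

theorem graphP_cast {m m' n n' : ℕ} (hm : m = m') (hn : n = n') (σ : Fin n → Fin m) :
    graphP m n σ = graphP m' n' (fun j => Fin.cast hm (σ (Fin.cast hn.symm j))) := by
  subst hm
  subst hn
  exact graphP_congr (fun j => rfl)

theorem tensor_wpF {n n' : ℕ} (f : Fin n → ℕ) (g : Fin n' → ℕ)
    (hdisj : ∀ i j, f i ≠ g j) :
    tensor (wpF n f) (wpF n' g) =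
      wpF (n + n') (fun j => if h : (j : ℕ) < n then f ⟨j, h⟩
        else g ⟨(j : ℕ) - n, by have := j.isLt; omega⟩) := by
  have hp : ∀ a b : Fin 0 ⊕ Fin n, (wpF n f).rel.r a b ↔
      Sum.elim (fun i : Fin 0 => 2 * (i : ℕ)) (fun i => 2 * f i) a
        = Sum.elim (fun i : Fin 0 => 2 * (i : ℕ)) (fun i => 2 * f i) b := by
    rintro (a | a) (b | b)
    · exact a.elim0
    · exact a.elim0
    · exact b.elim0
    · show f a = f b ↔ _
      simp only [Sum.elim_inr]
      omega
  have hq : ∀ a b : Fin 0 ⊕ Fin n', (wpF n' g).rel.r a b ↔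
      Sum.elim (fun i : Fin 0 => 2 * (i : ℕ)) (fun i => 2 * g i + 1) a
        = Sum.elim (fun i : Fin 0 => 2 * (i : ℕ)) (fun i => 2 * g i + 1) b := by
    rintro (a | a) (b | b)
    · exact a.elim0
    · exact a.elim0
    · exact b.elim0
    · show g a = g b ↔ _
      simp only [Sum.elim_inr]
      omega
  have hd : ∀ (a : Fin 0 ⊕ Fin n) (b : Fin 0 ⊕ Fin n'),
      Sum.elim (fun i : Fin 0 => 2 * (i : ℕ)) (fun i => 2 * f i) a
        ≠ Sum.elim (fun i : Fin 0 => 2 * (i : ℕ)) (fun i => 2 * g i + 1) b := by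
    rintro (a | a) (b | b)
    · exact a.elim0
    · exact a.elim0
    · exact b.elim0
    · show 2 * f a ≠ 2 * g b + 1
      omega
  have hF : ∀ z : Fin (0 + 0) ⊕ Fin (n + n'),
      Sum.elim (fun i : Fin (0+0) => 2 * (i : ℕ))
        (fun j : Fin (n + n') => 2 * (if h : (j : ℕ) < n then f ⟨j, h⟩
          else g ⟨(j : ℕ) - n, by have := j.isLt; omega⟩)
          + (if (j : ℕ) < n then 0 else 1)) z
      = Sum.elim (Sum.elim (fun i : Fin 0 => 2 * (i : ℕ)) (fun i => 2 * f i))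
          (Sum.elim (fun i : Fin 0 => 2 * (i : ℕ)) (fun i => 2 * g i + 1))
          (splitPoint z) := by
    rintro (u | v)
    · exact absurd u.isLt (by omega)
    · by_cases h : (v : ℕ) < n
      · rw [splitPoint_inr_lt v h]
        simp [h]
      · rw [splitPoint_inr_ge v (by omega)]
        simp [h]
  have hmain : ∀ x y : Fin (0 + 0) ⊕ Fin (n + n'),
      (Sum.elim (fun i : Fin (0+0) => 2 * (i : ℕ))
        (fun j : Fin (n + n') => 2 * (if h : (j : ℕ) < n then f ⟨j, h⟩
          else g ⟨(j : ℕ) - n, by have := j.isLt; omega⟩)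
          + (if (j : ℕ) < n then 0 else 1)) x
       = Sum.elim (fun i : Fin (0+0) => 2 * (i : ℕ))
        (fun j : Fin (n + n') => 2 * (if h : (j : ℕ) < n then f ⟨j, h⟩
          else g ⟨(j : ℕ) - n, by have := j.isLt; omega⟩)
          + (if (j : ℕ) < n then 0 else 1)) y) ↔
      ((Sum.elim (fun i : Fin (0+0) => (i : ℕ)) (fun j : Fin (n + n') => if h : (j : ℕ) < n then f ⟨j, h⟩
          else g ⟨(j : ℕ) - n, by have := j.isLt; omega⟩) (ptCast rfl rfl x) : ℕ)
       = Sum.elim (fun i : Fin (0+0) => (i : ℕ)) (fun j : Fin (n + n') => if h : (j : ℕ) < n then f ⟨j, h⟩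
          else g ⟨(j : ℕ) - n, by have := j.isLt; omega⟩) (ptCast rfl rfl y)) := by
    intro x y
    rw [ptCast_rfl x, ptCast_rfl y]
    rcases x with u | v <;> rcases y with u' | v'
    · exact absurd u.isLt (by omega)
    · exact absurd u.isLt (by omega)
    · exact absurd u'.isLt (by omega)
    · simp only [Sum.elim_inr]
      by_cases hv : (v : ℕ) < n <;> by_cases hw : (v' : ℕ) < n <;>
        simp only [hv, hw, if_pos, if_neg, dif_pos, dif_neg, not_false_iff] <;>
        first
          | omega
          | (constructor <;> intro h <;>
              first
                | omega
                | exact absurd h (hdisj _ _)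
                | exact absurd h.symm (hdisj _ _))
  exact (tensor_eq_ofLabels (wpF n f) (wpF n' g) _ _ hp hq hd _ hF).trans
    (ofLabels_eq rfl rfl _ _ hmain)

end PartitionHelpers
namespace PartitionHelpers
open PartitionDiagram

theorem crossing_eq_graphP :
    PartitionDiagram.crossing = graphP 2 2 (fun j => ⟨1 - (j : ℕ), by omega⟩) := rfl

theorem emptyP_mem : graphP 0 0 (fun j => j) ∈ gen := by
  have h : comp pairPartition (invol pairPartition) rfl = graphP 0 0 (fun j => j) := by
    refine pd_ext_gen _ _ rfl rfl ?_
    intro x y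
    rcases x with a | a <;> exact a.elim0
  rw [← h]
  exact gen_isCat.comp_mem _ gen_isCat.pair_mem _ (gen_isCat.invol_mem _ gen_isCat.pair_mem) rfl

theorem idPow_one_mem : graphP 1 1 (fun j => j) ∈ gen := by
  have h : idPartition = graphP 1 1 (fun j => j) := by
    refine ofLabels_eq rfl rfl _ _ ?_
    intro x y
    have hz : ∀ z : Fin 1 ⊕ Fin 1, Sum.elim Fin.val (fun j : Fin 1 => ((j : Fin 1) : ℕ)) z = 0 := by
      rintro (i | i) <;> (have := i.isLt; simp only [Sum.elim_inl, Sum.elim_inr]; omega)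
    constructor
    · intro _
      rw [hz, hz]
    · intro _
      rfl
  rw [← h]
  exact gen_isCat.id_mem

theorem idPow_mem (m : ℕ) : graphP m m (fun j => j) ∈ gen := by
  induction m with
  | zero => exact emptyP_mem
  | succ m ih =>
    have h := tensor_graphP (fun j : Fin m => j) (fun j : Fin 1 => j)
    have h2 : combineσ (fun j : Fin m => j) (fun j : Fin 1 => j) = fun j => j := by
      funext j
      apply Fin.ext
      simp only [combineσ]
      by_cases hj : (j : ℕ) < m
      · simp [hj]
      · have := j.isLt
        simp [hj]
        omega
    rw [h2] at h
    rw [← h]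
    exact gen_isCat.tensor_mem _ ih _ idPow_one_mem

theorem g3_mem : graphP 1 3 (fun _ => (⟨0, one_pos⟩ : Fin 1)) ∈ gen := by
  have h : rotLD fourBlock (by decide) = graphP 1 3 (fun _ => (⟨0, one_pos⟩ : Fin 1)) := by
    refine pd_ext_gen _ _ rfl rfl ?_
    intro x y
    have hz : ∀ z : Fin 1 ⊕ Fin 3,
        Sum.elim Fin.val (fun _ : Fin 3 => ((⟨0, one_pos⟩ : Fin 1) : ℕ)) z = 0 := by
      rintro (i | i)
      · have := i.isLt
        simp only [Sum.elim_inl]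
        omega
      · rfl
    have htot : ∀ z w : Fin 1 ⊕ Fin 3,
        (graphP 1 3 (fun _ => (⟨0, one_pos⟩ : Fin 1))).rel.r z w := by
      intro z w
      show Sum.elim Fin.val (fun _ : Fin 3 => ((⟨0, one_pos⟩ : Fin 1) : ℕ)) z
        = Sum.elim Fin.val (fun _ : Fin 3 => ((⟨0, one_pos⟩ : Fin 1) : ℕ)) w
      rw [hz, hz]
    exact iff_of_true rfl (htot _ _)
  rw [← h]
  exact gen_isCat.rotLD_mem _ fourBlock_mem_gen (by decide)

theorem uniform_mem (t a : ℕ) : wpF (2 * t + 2) (fun _ => a) ∈ gen := by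
  induction t with
  | zero =>
    have h : pairPartition = wpF (2 * 0 + 2) (fun _ => a) := by
      refine ofLabels_eq rfl rfl _ _ ?_
      rintro (i | i) (j | j)
      · exact i.elim0
      · exact i.elim0
      · exact j.elim0
      · exact iff_of_true rfl rfl
    rw [← h]
    exact gen_isCat.pair_mem
  | succ t ih =>
    -- the extension gadget
    have hσmem : graphP (2 * t + 2) (2 * t + 4)
        (fun j => if h : (j : ℕ) < 3 then ⟨0, by omega⟩
          else ⟨(j : ℕ) - 2, by have := j.isLt; omega⟩) ∈ gen := by
      have h1 := tensor_graphP (fun _ : Fin 3 => (⟨0, one_pos⟩ : Fin 1))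
        (fun j : Fin (2 * t + 1) => j)
      have hmem : tensor (graphP 1 3 (fun _ => (⟨0, one_pos⟩ : Fin 1)))
          (graphP (2 * t + 1) (2 * t + 1) (fun j => j)) ∈ gen :=
        gen_isCat.tensor_mem _ g3_mem _ (idPow_mem _)
      rw [h1] at hmem
      rw [graphP_cast (show 1 + (2 * t + 1) = 2 * t + 2 by omega)
        (show 3 + (2 * t + 1) = 2 * t + 4 by omega)] at hmem
      have h2 : (fun j => Fin.cast (show 1 + (2 * t + 1) = 2 * t + 2 by omega)
          ((combineσ (fun _ : Fin 3 => (⟨0, one_pos⟩ : Fin 1)) (fun j : Fin (2 * t + 1) => j))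
            (Fin.cast (show 3 + (2 * t + 1) = 2 * t + 4 by omega).symm j)))
          = (fun j : Fin (2 * t + 4) => if h : (j : ℕ) < 3 then (⟨0, by omega⟩ : Fin (2 * t + 2))
            else ⟨(j : ℕ) - 2, by have := j.isLt; omega⟩) := by
        funext j
        apply Fin.ext
        simp only [combineσ, Fin.coe_cast]
        by_cases hj : (j : ℕ) < 3
        · simp [hj]
        · have := j.isLt
          simp [hj]
          omega
      rw [h2] at hmem
      exact hmem
    have hcomp := comp_wpF_graphP (fun _ : Fin (2 * t + 2) => a)
      (fun j : Fin (2 * t + 4) => if h : (j : ℕ) < 3 then ⟨0, by omega⟩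
        else ⟨(j : ℕ) - 2, by have := j.isLt; omega⟩)
    have hmem2 := gen_isCat.comp_mem _ ih _ hσmem rfl
    rw [hcomp] at hmem2
    rw [wpF_cast (show 2 * t + 4 = 2 * (t + 1) + 2 by omega)] at hmem2
    exact hmem2

def swapσ (n c : ℕ) (hc : c + 1 < n) : Fin n → Fin n := fun j =>
  if (j : ℕ) = c then ⟨c + 1, hc⟩ else if (j : ℕ) = c + 1 then ⟨c, by omega⟩ else j

theorem swap_graph_mem (n c : ℕ) (hc : c + 1 < n) : graphP n n (swapσ n c hc) ∈ gen := by
  set d := n - c - 2 with hd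
  have hcross : graphP 2 2 (fun j => (⟨1 - (j : ℕ), by omega⟩ : Fin 2)) ∈ gen := by
    rw [← crossing_eq_graphP]; exact crossing_mem_gen
  have hinner : tensor (graphP 2 2 (fun j => (⟨1 - (j : ℕ), by omega⟩ : Fin 2)))
      (graphP d d (fun j => j)) ∈ gen :=
    gen_isCat.tensor_mem _ hcross _ (idPow_mem d)
  rw [tensor_graphP] at hinner
  have houter : tensor (graphP c c (fun j => j))
      (graphP (2 + d) (2 + d) (combineσ (fun j => (⟨1 - (j : ℕ), by omega⟩ : Fin 2))
        (fun j : Fin d => j))) ∈ gen :=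
    gen_isCat.tensor_mem _ (idPow_mem c) _ hinner
  rw [tensor_graphP] at houter
  rw [graphP_cast (show c + (2 + d) = n by omega) (show c + (2 + d) = n by omega)] at houter
  have h2 : (fun j => Fin.cast (show c + (2 + d) = n by omega)
      ((combineσ (fun j : Fin c => j)
        (combineσ (fun j => (⟨1 - (j : ℕ), by omega⟩ : Fin 2)) (fun j : Fin d => j)))
        (Fin.cast (show c + (2 + d) = n by omega).symm j)))
      = swapσ n c hc := by
    funext j
    apply Fin.ext
    have hj := j.isLt
    simp only [combineσ, swapσ, Fin.coe_cast]
    by_cases e1 : (j : ℕ) = c <;> by_cases e2 : (j : ℕ) = c + 1 <;>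
      simp only [e1, e2, if_pos, if_neg, not_false_iff] <;> split_ifs <;> simp_all <;> omega
  rw [h2] at houter
  exact houter

end PartitionHelpers
namespace PartitionHelpers
open PartitionDiagram

theorem getElem_append_cons_cons (u v : ℕ) (D : List ℕ) :
    ∀ (C : List ℕ) (i : ℕ) (h : i < (C ++ (u :: v :: D)).length),
      (C ++ (u :: v :: D))[i] =
        if h1 : i < C.length then C[i]
        else if h2 : i = C.length then u
        else if h3 : i = C.length + 1 then v
        else D[i - C.length - 2]'(by simp at h; omega) := by
  intro C
  induction C with
  | nil =>
    intro i h
    rcases i with _ | _ | i <;> simp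
  | cons c C ih =>
    intro i h
    rcases i with _ | i
    · simp
    · have h' : i < (C ++ (u :: v :: D)).length := by simp at h ⊢; omega
      have := ih i h'
      simp only [List.cons_append, List.getElem_cons_succ, this, List.length_cons]
      by_cases h1 : i < C.length <;> by_cases h2 : i = C.length <;>
        by_cases h3 : i = C.length + 1 <;>
        simp [h1, h2, h3] <;> first | omega | rfl

theorem mem_of_comp_graph {L L' : List ℕ} (σ : Fin L'.length → Fin L.length)
    (hσ : ∀ j, L'.get j = L.get (σ j)) (hg : graphP L.length L'.length σ ∈ gen)
    (hL : wordPartition L ∈ gen) : wordPartition L' ∈ gen := by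
  rw [wordPartition_eq_wpF] at hL ⊢
  rw [show L'.get = L.get ∘ σ from funext hσ, ← comp_wpF_graphP]
  exact gen_isCat.comp_mem _ hL _ hg rfl

theorem move_swap (C : List ℕ) (u v : ℕ) (D : List ℕ)
    (h : wordPartition (C ++ (u :: v :: D)) ∈ gen) :
    wordPartition (C ++ (v :: u :: D)) ∈ gen := by
  have hlen : (C ++ (u :: v :: D)).length = (C ++ (v :: u :: D)).length := by simp
  have hcle : C.length + 1 < (C ++ (u :: v :: D)).length := by
    simp only [List.length_append, List.length_cons]
    omega
  have hg := swap_graph_mem _ C.length hcle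
  rw [graphP_cast (rfl : (C ++ (u :: v :: D)).length = (C ++ (u :: v :: D)).length) hlen] at hg
  refine mem_of_comp_graph _ ?_ hg h
  intro j
  have hj := j.isLt
  have hj' : (j : ℕ) < C.length + D.length + 2 := by simp at hj; omega
  have hsv : ((Fin.cast rfl (swapσ (C ++ (u :: v :: D)).length C.length hcle
        (Fin.cast hlen.symm j)) : Fin (C ++ (u :: v :: D)).length) : ℕ)
      = if (j : ℕ) = C.length then C.length + 1
        else if (j : ℕ) = C.length + 1 then C.length else (j : ℕ) := by
    simp only [swapσ, Fin.coe_cast]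
    split_ifs <;> rfl
  rw [List.get_eq_getElem, List.get_eq_getElem, getElem_append_cons_cons,
    getElem_append_cons_cons]
  simp only [hsv]
  by_cases e1 : (j : ℕ) = C.length <;> by_cases e2 : (j : ℕ) = C.length + 1 <;>
    simp [e1, e2] <;> omega

theorem move_head (x : ℕ) (D : List ℕ) :
    ∀ (R C : List ℕ), wordPartition (C ++ (R ++ (x :: D))) ∈ gen →
      wordPartition (C ++ (x :: (R ++ D))) ∈ gen := by
  intro R
  induction R with
  | nil => intro C h; simpa using h
  | cons r R ih =>
    intro C h
    have h1 : wordPartition ((C ++ [r]) ++ (R ++ (x :: D))) ∈ gen := by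
      simpa [List.append_assoc] using h
    have h2 := ih (C ++ [r]) h1
    have h3 : wordPartition (C ++ (r :: x :: (R ++ D))) ∈ gen := by
      simpa [List.append_assoc] using h2
    have h4 := move_swap C r x (R ++ D) h3
    simpa using h4

theorem ungroup (a : ℕ) :
    ∀ (T C : List ℕ),
      wordPartition (C ++ (List.replicate (T.count a) a ++ T.filter (fun x => x ≠ a))) ∈ gen →
      wordPartition (C ++ T) ∈ gen := by
  intro T
  induction T with
  | nil => intro C h; simpa using h
  | cons t T ih =>
    intro C h
    by_cases ht : t = a
    · subst ht
      rw [List.count_cons_self, List.filter_cons_of_neg (by simp)] at h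
      have h1 : wordPartition ((C ++ [t]) ++
          (List.replicate (T.count t) t ++ T.filter (fun x => x ≠ t))) ∈ gen := by
        simpa [List.replicate_succ, List.append_assoc] using h
      have h2 := ih (C ++ [t]) h1
      simpa [List.append_assoc] using h2
    · rw [List.count_cons_of_ne (by simpa using ht) ,
        List.filter_cons_of_pos (by simpa using ht)] at h
      have h1 : wordPartition (C ++ (List.replicate (T.count a) a ++
          (t :: (T.filter (fun x => x ≠ a))))) ∈ gen := by
        simpa using h
      have h2 := move_head t (T.filter (fun x => x ≠ a)) (List.replicate (T.count a) a) C h1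
      have h3 : wordPartition ((C ++ [t]) ++
          (List.replicate (T.count a) a ++ T.filter (fun x => x ≠ a))) ∈ gen := by
        simpa [List.append_assoc] using h2
      have h4 := ih (C ++ [t]) h3
      simpa [List.append_assoc] using h4

theorem grouped_mem (a k : ℕ) (hk : Even k) (hk0 : k ≠ 0) (M : List ℕ)
    (hM : wordPartition M ∈ gen) (ha : a ∉ M) :
    wordPartition (List.replicate k a ++ M) ∈ gen := by
  obtain ⟨t, ht⟩ := hk
  have hk2 : k = 2 * t := by omega
  have ht0 : t ≠ 0 := by omega
  obtain ⟨s, hs⟩ : ∃ s, t = s + 1 := ⟨t - 1, by omega⟩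
  have huni : wpF (2 * s + 2) (fun _ => a) ∈ gen := uniform_mem s a
  rw [wordPartition_eq_wpF] at hM
  have hdisj : ∀ (i : Fin (2 * s + 2)) (j : Fin M.length),
      (fun _ : Fin (2 * s + 2) => a) i ≠ M.get j := by
    intro i j hEq
    have hmem : M.get j ∈ M := List.get_mem M j
    rw [← hEq] at hmem
    exact ha hmem
  have htens := gen_isCat.tensor_mem _ huni _ hM
  rw [tensor_wpF _ _ hdisj] at htens
  rw [wpF_cast (show (2 * s + 2) + M.length = (List.replicate k a ++ M).length by
    simp only [List.length_append, List.length_replicate]; omega)] at htens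
  rw [wordPartition_eq_wpF]
  have hfun : ((fun j : Fin ((2 * s + 2) + M.length) =>
      if h : (j : ℕ) < 2 * s + 2 then (fun _ : Fin (2 * s + 2) => a) ⟨j, h⟩
      else M.get ⟨(j : ℕ) - (2 * s + 2), by have := j.isLt; omega⟩) ∘
      (Fin.cast (show (2 * s + 2) + M.length = (List.replicate k a ++ M).length by
        simp only [List.length_append, List.length_replicate]; omega).symm))
      = (List.replicate k a ++ M).get := by
    funext j
    have hj := j.isLt
    have hj' : (j : ℕ) < (List.replicate k a ++ M).length := hj
    simp only [Function.comp_apply, Fin.coe_cast, List.get_eq_getElem]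
    by_cases h : (j : ℕ) < 2 * s + 2
    · rw [dif_pos h, List.getElem_append_left
        (by simp only [List.length_replicate]; omega)]
      rw [List.getElem_replicate]
    · rw [dif_neg h, List.getElem_append_right
        (by simp only [List.length_replicate]; omega)]
      simp only [List.length_replicate, List.get_eq_getElem]
      congr 1
      omega
  rw [hfun] at htens
  exact htens

theorem gen_of_even_counts : ∀ (N : ℕ) (L : List ℕ), L.length ≤ N →
    (∀ n, Even (L.count n)) → wordPartition L ∈ gen := by
  intro N
  induction N with
  | zero =>
    intro L hL _
    have : L = [] := List.eq_nil_of_length_eq_zero (by omega)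
    subst this
    have h : wordPartition ([] : List ℕ) = graphP 0 0 (fun j => j) := by
      refine pd_ext_gen _ _ rfl rfl ?_
      intro x y
      rcases x with a | a <;> exact a.elim0
    rw [h]
    exact emptyP_mem
  | succ N ih =>
    intro L hL hcount
    rcases L with _ | ⟨a, T⟩
    · exact ih [] (by simp) (by simpa using hcount)
    · set M := (a :: T).filter (fun x => x ≠ a) with hM
      have hMlen : M.length ≤ T.length := by
        rw [hM, List.filter_cons_of_neg (by simp)]
        exact List.length_filter_le _ _
      have hMcount : ∀ n, Even (M.count n) := by
        intro n
        by_cases hn : n = a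
        · subst hn
          have : M.count n = 0 := by
            rw [List.count_eq_zero]
            intro hmem
            rw [hM] at hmem
            have := List.of_mem_filter hmem
            simp at this
          rw [this]
          exact Even.zero
        · have : M.count n = (a :: T).count n := by
            rw [hM, List.count_filter (by simpa using hn)]
          rw [this]
          exact hcount n
      have hlq : (a :: T).length = T.length + 1 := by simp
      have hMmem : wordPartition M ∈ gen := ih M (by omega) hMcount
      have haM : a ∉ M := by
        intro hmem
        rw [hM] at hmem
        have := List.of_mem_filter hmem
        simp at this
      have hk : Even ((a :: T).count a) := hcount a
      have hk0 : (a :: T).count a ≠ 0 := by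
        simp [List.count_cons_self]
      have hgrouped := grouped_mem a ((a :: T).count a) hk hk0 M hMmem haM
      have hfin := ungroup a (a :: T) []
        (by simpa [hM, List.filter_cons_of_neg, List.count_cons_self] using hgrouped)
      simpa using hfin

end PartitionHelpers
namespace PartitionHelpers
open PartitionDiagram

/-! ### Even block sizes -/

noncomputable def blockCard (p : PartitionDiagram) (x : Fin p.upper ⊕ Fin p.lower) : ℕ :=
  (Finset.univ.filter (fun y => p.rel.r x y)).card

def EvenBlocks (p : PartitionDiagram) : Prop := ∀ x, Even (blockCard p x)

theorem card_filter_sum {α β : Type} [Fintype α] [Fintype β] (P : α ⊕ β → Prop) :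
    (Finset.univ.filter P).card
      = (Finset.univ.filter (fun a => P (Sum.inl a))).card
        + (Finset.univ.filter (fun b => P (Sum.inr b))).card := by
  rw [← Fintype.card_subtype, ← Fintype.card_subtype, ← Fintype.card_subtype,
    ← Fintype.card_sum]
  exact Fintype.card_congr Equiv.subtypeSum

theorem card_filter_bij {α β : Type} [Fintype α] [Fintype β] (f : α → β)
    (hf : Function.Bijective f) (P : β → Prop) :
    (Finset.univ.filter (fun a => P (f a))).card = (Finset.univ.filter P).card := by
  rw [← Fintype.card_subtype, ← Fintype.card_subtype]
  exact Fintype.card_congr ((Equiv.ofBijective f hf).subtypeEquiv (fun a => Iff.rfl))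

theorem even_card_saturated {α : Type} [Fintype α] (r : Setoid α)
    (hE : ∀ x, Even ((Finset.univ.filter (fun y => r.r x y)).card))
    (s : Finset α) (hs : ∀ x ∈ s, ∀ y, r.r x y → y ∈ s) : Even s.card := by
  rw [Finset.card_eq_sum_card_fiberwise (f := fun a => Quotient.mk r a)
      (t := s.image (fun a => Quotient.mk r a)) (fun x hx => Finset.mem_image_of_mem _ hx)]
  refine Finset.sum_induction _ Even (fun a b => Even.add) Even.zero ?_
  intro b hb
  obtain ⟨x, hx, rfl⟩ := Finset.mem_image.1 hb
  have hfil : s.filter (fun a => Quotient.mk r a = Quotient.mk r x)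
      = Finset.univ.filter (fun y => r.r x y) := by
    ext y
    simp only [Finset.mem_filter, Finset.mem_univ, true_and]
    constructor
    · rintro ⟨hy, h⟩
      exact r.symm' (Quotient.exact h)
    · intro h
      exact ⟨hs x hx y h, Quotient.sound (r.symm' h)⟩
  rw [hfil]
  exact hE x

theorem evenBlocks_comap {u' l' : ℕ} (p : PartitionDiagram)
    (f : Fin u' ⊕ Fin l' → Fin p.upper ⊕ Fin p.lower) (hf : Function.Bijective f)
    (hp : EvenBlocks p) : EvenBlocks ⟨u', l', Setoid.comap f p.rel⟩ := by
  intro x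
  show Even ((Finset.univ.filter (fun y => p.rel.r (f x) (f y))).card)
  rw [card_filter_bij f hf (fun z => p.rel.r (f x) z)]
  exact hp (f x)

theorem evenBlocks_invol (p : PartitionDiagram) (hp : EvenBlocks p) :
    EvenBlocks (invol p) :=
  evenBlocks_comap p Sum.swap (Equiv.sumComm (Fin p.lower) (Fin p.upper)).bijective hp

theorem evenBlocks_rotLU (p : PartitionDiagram) (h : 0 < p.upper) (hp : EvenBlocks p) :
    EvenBlocks (rotLU p h) := by
  refine evenBlocks_comap p _ ?_ hp
  rw [Fintype.bijective_iff_injective_and_card]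
  constructor
  · intro x y hxy
    rcases x with a | a <;> rcases y with b | b <;> dsimp only at hxy
    · have hab : (a : ℕ) + 1 = (b : ℕ) + 1 := by
        have := Sum.inl.inj hxy
        exact congrArg Fin.val this
      exact congrArg Sum.inl (Fin.ext (by omega))
    · by_cases hb : (b : ℕ) = 0
      · rw [dif_pos hb] at hxy
        have := congrArg Fin.val (Sum.inl.inj hxy)
        simp at this
      · rw [dif_neg hb] at hxy
        exact absurd hxy (by simp)
    · by_cases ha : (a : ℕ) = 0
      · rw [dif_pos ha] at hxy
        have := congrArg Fin.val (Sum.inl.inj hxy.symm)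
        simp at this
      · rw [dif_neg ha] at hxy
        exact absurd hxy.symm (by simp)
    · by_cases ha : (a : ℕ) = 0 <;> by_cases hb : (b : ℕ) = 0
      · rw [dif_pos ha, dif_pos hb] at hxy
        exact congrArg Sum.inr (Fin.ext (by omega))
      · rw [dif_pos ha, dif_neg hb] at hxy
        exact absurd hxy (by simp)
      · rw [dif_neg ha, dif_pos hb] at hxy
        exact absurd hxy (by simp)
      · rw [dif_neg ha, dif_neg hb] at hxy
        have hab := congrArg Fin.val (Sum.inr.inj hxy)
        have ha' := a.isLt
        have hb' := b.isLt
        simp at hab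
        exact congrArg Sum.inr (Fin.ext (by omega))
  · simp only [Fintype.card_sum, Fintype.card_fin]
    omega

theorem evenBlocks_rotLD (p : PartitionDiagram) (h : 0 < p.lower) (hp : EvenBlocks p) :
    EvenBlocks (rotLD p h) := by
  refine evenBlocks_comap p _ ?_ hp
  rw [Fintype.bijective_iff_injective_and_card]
  constructor
  · intro x y hxy
    rcases x with a | a <;> rcases y with b | b <;> dsimp only at hxy
    · by_cases ha : (a : ℕ) = 0 <;> by_cases hb : (b : ℕ) = 0
      · rw [dif_pos ha, dif_pos hb] at hxy
        exact congrArg Sum.inl (Fin.ext (by omega))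
      · rw [dif_pos ha, dif_neg hb] at hxy
        exact absurd hxy (by simp)
      · rw [dif_neg ha, dif_pos hb] at hxy
        exact absurd hxy (by simp)
      · rw [dif_neg ha, dif_neg hb] at hxy
        have hab := congrArg Fin.val (Sum.inl.inj hxy)
        have ha' := a.isLt
        have hb' := b.isLt
        simp at hab
        exact congrArg Sum.inl (Fin.ext (by omega))
    · by_cases ha : (a : ℕ) = 0
      · rw [dif_pos ha] at hxy
        have := congrArg Fin.val (Sum.inr.inj hxy)
        simp at this
      · rw [dif_neg ha] at hxy
        exact absurd hxy (by simp)
    · by_cases hb : (b : ℕ) = 0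
      · rw [dif_pos hb] at hxy
        have := congrArg Fin.val (Sum.inr.inj hxy.symm)
        simp at this
      · rw [dif_neg hb] at hxy
        exact absurd hxy.symm (by simp)
    · have hab : (a : ℕ) + 1 = (b : ℕ) + 1 := congrArg Fin.val (Sum.inr.inj hxy)
      exact congrArg Sum.inr (Fin.ext (by omega))
  · simp only [Fintype.card_sum, Fintype.card_fin]
    omega

theorem evenBlocks_rotRU (p : PartitionDiagram) (h : 0 < p.upper) (hp : EvenBlocks p) :
    EvenBlocks (rotRU p h) := by
  refine evenBlocks_comap p _ ?_ hp
  rw [Fintype.bijective_iff_injective_and_card]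
  constructor
  · intro x y hxy
    rcases x with a | a <;> rcases y with b | b <;> dsimp only at hxy
    · have hab := congrArg Fin.val (Sum.inl.inj hxy)
      exact congrArg Sum.inl (Fin.ext (by simpa using hab))
    · by_cases hb : (b : ℕ) < p.lower
      · rw [dif_pos hb] at hxy
        exact absurd hxy (by simp)
      · rw [dif_neg hb] at hxy
        have := congrArg Fin.val (Sum.inl.inj hxy)
        have ha' := a.isLt
        simp at this
        omega
    · by_cases ha : (a : ℕ) < p.lower
      · rw [dif_pos ha] at hxy
        exact absurd hxy.symm (by simp)
      · rw [dif_neg ha] at hxy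
        have := congrArg Fin.val (Sum.inl.inj hxy.symm)
        have hb' := b.isLt
        simp at this
        omega
    · by_cases ha : (a : ℕ) < p.lower <;> by_cases hb : (b : ℕ) < p.lower
      · rw [dif_pos ha, dif_pos hb] at hxy
        have := congrArg Fin.val (Sum.inr.inj hxy)
        simp at this
        exact congrArg Sum.inr (Fin.ext this)
      · rw [dif_pos ha, dif_neg hb] at hxy
        exact absurd hxy (by simp)
      · rw [dif_neg ha, dif_pos hb] at hxy
        exact absurd hxy (by simp)
      · have ha' := a.isLt
        have hb' := b.isLt
        exact congrArg Sum.inr (Fin.ext (by omega))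
  · simp only [Fintype.card_sum, Fintype.card_fin]
    omega

theorem evenBlocks_rotRD (p : PartitionDiagram) (h : 0 < p.lower) (hp : EvenBlocks p) :
    EvenBlocks (rotRD p h) := by
  refine evenBlocks_comap p _ ?_ hp
  rw [Fintype.bijective_iff_injective_and_card]
  constructor
  · intro x y hxy
    rcases x with a | a <;> rcases y with b | b <;> dsimp only at hxy
    · by_cases ha : (a : ℕ) < p.upper <;> by_cases hb : (b : ℕ) < p.upper
      · rw [dif_pos ha, dif_pos hb] at hxy
        have := congrArg Fin.val (Sum.inl.inj hxy)
        simp at this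
        exact congrArg Sum.inl (Fin.ext this)
      · rw [dif_pos ha, dif_neg hb] at hxy
        exact absurd hxy (by simp)
      · rw [dif_neg ha, dif_pos hb] at hxy
        exact absurd hxy (by simp)
      · have ha' := a.isLt
        have hb' := b.isLt
        exact congrArg Sum.inl (Fin.ext (by omega))
    · by_cases ha : (a : ℕ) < p.upper
      · rw [dif_pos ha] at hxy
        exact absurd hxy (by simp)
      · rw [dif_neg ha] at hxy
        have := congrArg Fin.val (Sum.inr.inj hxy)
        have hb' := b.isLt
        simp at this
        omega
    · by_cases hb : (b : ℕ) < p.upper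
      · rw [dif_pos hb] at hxy
        exact absurd hxy.symm (by simp)
      · rw [dif_neg hb] at hxy
        have := congrArg Fin.val (Sum.inr.inj hxy.symm)
        have ha' := a.isLt
        simp at this
        omega
    · have hab := congrArg Fin.val (Sum.inr.inj hxy)
      exact congrArg Sum.inr (Fin.ext (by simpa using hab))
  · simp only [Fintype.card_sum, Fintype.card_fin]
    omega

end PartitionHelpers
namespace PartitionHelpers
open PartitionDiagram

def unsplitPoint {a b c d : ℕ} : (Fin a ⊕ Fin c) ⊕ (Fin b ⊕ Fin d) → Fin (a + b) ⊕ Fin (c + d)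
  | .inl (.inl i) => .inl (Fin.castAdd b i)
  | .inl (.inr j) => .inr (Fin.castAdd d j)
  | .inr (.inl i) => .inl (Fin.natAdd a i)
  | .inr (.inr j) => .inr (Fin.natAdd c j)

theorem splitPoint_unsplit {a b c d : ℕ} (w : (Fin a ⊕ Fin c) ⊕ (Fin b ⊕ Fin d)) :
    splitPoint (unsplitPoint w) = w := by
  rcases w with (i | j) | (i | j) <;>
    simp [unsplitPoint, splitPoint, finSumFinEquiv_symm_apply_castAdd,
      finSumFinEquiv_symm_apply_natAdd]

theorem unsplit_split {a b c d : ℕ} (z : Fin (a + b) ⊕ Fin (c + d)) :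
    unsplitPoint (splitPoint (a := a) (b := b) (c := c) (d := d) z) = z := by
  rcases z with u | v
  · rcases hs : finSumFinEquiv.symm u with i | i <;>
      · simp [splitPoint, hs, unsplitPoint]
        have := congrArg finSumFinEquiv hs
        rw [Equiv.apply_symm_apply] at this
        simp [finSumFinEquiv_apply_left, finSumFinEquiv_apply_right] at this
        exact this.symm
  · rcases hs : finSumFinEquiv.symm v with i | i <;>
      · simp [splitPoint, hs, unsplitPoint]
        have := congrArg finSumFinEquiv hs
        rw [Equiv.apply_symm_apply] at this
        simp [finSumFinEquiv_apply_left, finSumFinEquiv_apply_right] at this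
        exact this.symm

theorem unsplit_bijective {a b c d : ℕ} :
    Function.Bijective (unsplitPoint (a := a) (b := b) (c := c) (d := d)) :=
  Function.bijective_iff_has_inverse.2 ⟨splitPoint, splitPoint_unsplit, unsplit_split⟩

theorem evenBlocks_tensor (p q : PartitionDiagram) (hp : EvenBlocks p) (hq : EvenBlocks q) :
    EvenBlocks (tensor p q) := by
  intro x
  have e0 : blockCard (tensor p q) x
      = (Finset.univ.filter (fun w : (Fin p.upper ⊕ Fin p.lower) ⊕ (Fin q.upper ⊕ Fin q.lower) =>
          (tensor p q).rel.r x (unsplitPoint w))).card :=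
    (card_filter_bij unsplitPoint unsplit_bijective
      (fun y => (tensor p q).rel.r x y)).symm
  have e1 : (Finset.univ.filter (fun w : (Fin p.upper ⊕ Fin p.lower) ⊕ (Fin q.upper ⊕ Fin q.lower) =>
          (tensor p q).rel.r x (unsplitPoint w))).card
      = (Finset.univ.filter (fun w : Fin p.upper ⊕ Fin p.lower =>
          (tensor p q).rel.r x (unsplitPoint (Sum.inl w)))).card
        + (Finset.univ.filter (fun w : Fin q.upper ⊕ Fin q.lower =>
          (tensor p q).rel.r x (unsplitPoint (Sum.inr w)))).card :=
    card_filter_sum _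
  rw [show blockCard (tensor p q) x = _ from e0, e1]
  rcases hx : splitPoint x with a₀ | b₀
  · have h1 : ∀ w : Fin p.upper ⊕ Fin p.lower,
        (tensor p q).rel.r x (unsplitPoint (Sum.inl w)) ↔ p.rel.r a₀ w := by
      intro w
      refine (tensor_rel_iff p q x _).trans ?_
      rw [hx, splitPoint_unsplit]
      simp
    have h2 : ∀ w : Fin q.upper ⊕ Fin q.lower,
        ¬ (tensor p q).rel.r x (unsplitPoint (Sum.inr w)) := by
      intro w hw
      replace hw := (tensor_rel_iff p q x _).1 hw
      rw [hx, splitPoint_unsplit] at hw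
      simp at hw
    have e2 : Finset.univ.filter (fun w : Fin p.upper ⊕ Fin p.lower =>
        (tensor p q).rel.r x (unsplitPoint (Sum.inl w)))
        = Finset.univ.filter (fun w => p.rel.r a₀ w) :=
      Finset.filter_congr (fun w _ => h1 w)
    have e3 : Finset.univ.filter (fun w : Fin q.upper ⊕ Fin q.lower =>
        (tensor p q).rel.r x (unsplitPoint (Sum.inr w))) = ∅ := by
      ext w
      simp [h2 w]
    rw [e2, e3]
    simpa [blockCard] using hp a₀
  · have h1 : ∀ w : Fin q.upper ⊕ Fin q.lower,
        (tensor p q).rel.r x (unsplitPoint (Sum.inr w)) ↔ q.rel.r b₀ w := by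
      intro w
      refine (tensor_rel_iff p q x _).trans ?_
      rw [hx, splitPoint_unsplit]
      simp
    have h2 : ∀ w : Fin p.upper ⊕ Fin p.lower,
        ¬ (tensor p q).rel.r x (unsplitPoint (Sum.inl w)) := by
      intro w hw
      replace hw := (tensor_rel_iff p q x _).1 hw
      rw [hx, splitPoint_unsplit] at hw
      simp at hw
    have e2 : Finset.univ.filter (fun w : Fin q.upper ⊕ Fin q.lower =>
        (tensor p q).rel.r x (unsplitPoint (Sum.inr w)))
        = Finset.univ.filter (fun w => q.rel.r b₀ w) :=
      Finset.filter_congr (fun w _ => h1 w)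
    have e3 : Finset.univ.filter (fun w : Fin p.upper ⊕ Fin p.lower =>
        (tensor p q).rel.r x (unsplitPoint (Sum.inl w))) = ∅ := by
      ext w
      simp [h2 w]
    rw [e2, e3]
    simpa [blockCard] using hq b₀

theorem evenBlocks_comp (p q : PartitionDiagram) (h : p.lower = q.upper)
    (hp : EvenBlocks p) (hq : EvenBlocks q) : EvenBlocks (comp p q h) := by
  intro x₀
  set c : Fin p.upper ⊕ (Fin p.lower ⊕ Fin q.lower) → Prop :=
    fun t => Relation.EqvGen (compRel p q h) (Sum.map id Sum.inr x₀) t with hc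
  have csat : ∀ t t', compRel p q h t t' → (c t → c t') := by
    intro t t' htt' hct
    exact hct.trans _ _ _ (Relation.EqvGen.rel _ _ htt')
  have hPsat : Even ((Finset.univ.filter
      (fun z : Fin p.upper ⊕ Fin p.lower => c (iotaP p q z))).card) := by
    refine even_card_saturated p.rel (fun z => hp z) _ ?_
    intro z hz w hzw
    simp only [Finset.mem_filter, Finset.mem_univ, true_and] at hz ⊢
    exact csat _ _ (Or.inl ⟨z, w, hzw, rfl, rfl⟩) hz
  have hQsat : Even ((Finset.univ.filter
      (fun z : Fin q.upper ⊕ Fin q.lower => c (iotaQ p q h z))).card) := by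
    refine even_card_saturated q.rel (fun z => hq z) _ ?_
    intro z hz w hzw
    simp only [Finset.mem_filter, Finset.mem_univ, true_and] at hz ⊢
    exact csat _ _ (Or.inr ⟨z, w, hzw, rfl, rfl⟩) hz
  have hPsplit : (Finset.univ.filter
      (fun z : Fin p.upper ⊕ Fin p.lower => c (iotaP p q z))).card
      = (Finset.univ.filter (fun u : Fin p.upper => c (Sum.inl u))).card
        + (Finset.univ.filter (fun m : Fin p.lower => c (Sum.inr (Sum.inl m)))).card :=
    card_filter_sum (fun z : Fin p.upper ⊕ Fin p.lower => c (iotaP p q z))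
  have hQ1 : (Finset.univ.filter
      (fun z : Fin q.upper ⊕ Fin q.lower => c (iotaQ p q h z))).card
      = (Finset.univ.filter (fun m : Fin q.upper =>
          c (Sum.inr (Sum.inl (Fin.cast h.symm m))))).card
        + (Finset.univ.filter (fun d : Fin q.lower => c (Sum.inr (Sum.inr d)))).card :=
    card_filter_sum (fun z : Fin q.upper ⊕ Fin q.lower => c (iotaQ p q h z))
  have hQ2 : (Finset.univ.filter (fun m : Fin q.upper =>
          c (Sum.inr (Sum.inl (Fin.cast h.symm m))))).card
      = (Finset.univ.filter (fun m : Fin p.lower => c (Sum.inr (Sum.inl m)))).card :=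
    card_filter_bij (Fin.cast h.symm)
      ⟨fun a b hab => Fin.ext (by simpa using congrArg Fin.val hab),
        fun y => ⟨Fin.cast h y, Fin.ext rfl⟩⟩
      (fun m : Fin p.lower => c (Sum.inr (Sum.inl m)))
  have houter : blockCard (comp p q h) x₀
      = (Finset.univ.filter (fun u : Fin p.upper => c (Sum.inl u))).card
        + (Finset.univ.filter (fun d : Fin q.lower => c (Sum.inr (Sum.inr d)))).card :=
    card_filter_sum (fun y : Fin p.upper ⊕ Fin q.lower => c (Sum.map id Sum.inr y))
  rw [houter]
  rw [hPsplit] at hPsat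
  rw [hQ1, hQ2] at hQsat
  obtain ⟨r, hr⟩ := hPsat
  obtain ⟨t, ht⟩ := hQsat
  exact ⟨r + t - (Finset.univ.filter
    (fun m : Fin p.lower => c (Sum.inr (Sum.inl m)))).card, by omega⟩

theorem blockCard_ofLabels_const {u l : ℕ} (x : Fin u ⊕ Fin l) :
    blockCard (ofLabels (u := u) (l := l) (fun _ => 0)) x = u + l := by
  unfold blockCard
  have htot : ∀ y : Fin u ⊕ Fin l,
      (ofLabels (u := u) (l := l) (fun _ => 0)).rel.r x y := fun y => rfl
  calc _ = (Finset.univ : Finset (Fin u ⊕ Fin l)).card :=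
        congrArg Finset.card
          (@Finset.filter_true_of_mem _ _ (fun _ => Classical.propDecidable _) _ (fun y _ => htot y))
    _ = u + l := by simp

theorem evenBlocks_id : EvenBlocks idPartition := by
  intro x
  rw [show blockCard idPartition x = 1 + 1 from blockCard_ofLabels_const x]
  exact ⟨1, rfl⟩

theorem evenBlocks_pair : EvenBlocks pairPartition := by
  intro x
  rw [show blockCard pairPartition x = 0 + 2 from blockCard_ofLabels_const x]
  exact ⟨1, rfl⟩

theorem evenBlocks_four : EvenBlocks fourBlock := by
  intro x
  rw [show blockCard fourBlock x = 0 + 4 from blockCard_ofLabels_const x]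
  exact ⟨2, rfl⟩

theorem crossing_rel_iff (x y : Fin 2 ⊕ Fin 2) :
    PartitionDiagram.crossing.rel.r x y ↔
      Sum.elim (fun i : Fin 2 => (i : ℕ)) (fun j : Fin 2 => 1 - (j : ℕ)) x
        = Sum.elim (fun i : Fin 2 => (i : ℕ)) (fun j : Fin 2 => 1 - (j : ℕ)) y := Iff.rfl

theorem evenBlocks_crossing : EvenBlocks PartitionDiagram.crossing := by
  have main : ∀ x : Fin 2 ⊕ Fin 2, Even (blockCard PartitionDiagram.crossing x) := by
    intro x
    have h2 : (Finset.univ.filter (fun y : Fin 2 ⊕ Fin 2 =>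
        Sum.elim (fun i : Fin 2 => (i : ℕ)) (fun j : Fin 2 => 1 - (j : ℕ)) x
          = Sum.elim (fun i : Fin 2 => (i : ℕ)) (fun j : Fin 2 => 1 - (j : ℕ)) y)).card = 2 := by
      revert x; decide
    unfold blockCard
    show Even (@Finset.card (Fin 2 ⊕ Fin 2)
      (Finset.univ.filter (fun y : Fin 2 ⊕ Fin 2 => PartitionDiagram.crossing.rel.r x y)))
    exact ⟨1, (congrArg Finset.card (Finset.filter_congr (s := Finset.univ)
      (p := fun y : Fin 2 ⊕ Fin 2 => PartitionDiagram.crossing.rel.r x y)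
      (q := fun y : Fin 2 ⊕ Fin 2 =>
        Sum.elim (fun i : Fin 2 => (i : ℕ)) (fun j : Fin 2 => 1 - (j : ℕ)) x
          = Sum.elim (fun i : Fin 2 => (i : ℕ)) (fun j : Fin 2 => 1 - (j : ℕ)) y)
      (fun y _ => Iff.rfl))).trans h2⟩
  exact fun x => main x

theorem even_cat : IsPartitionCategory {p : PartitionDiagram | EvenBlocks p} := by
  constructor
  · exact evenBlocks_id
  · exact evenBlocks_pair
  · exact fun p hp q hq => evenBlocks_tensor p q hp hq
  · exact fun p hp q hq h => evenBlocks_comp p q h hp hq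
  · exact fun p hp => evenBlocks_invol p hp
  · exact fun p hp h => evenBlocks_rotLU p h hp
  · exact fun p hp h => evenBlocks_rotLD p h hp
  · exact fun p hp h => evenBlocks_rotRU p h hp
  · exact fun p hp h => evenBlocks_rotRD p h hp

theorem gen_evenBlocks {p : PartitionDiagram} (hp : p ∈ gen) : EvenBlocks p :=
  gen_subset even_cat evenBlocks_crossing evenBlocks_four hp

end PartitionHelpers
namespace PartitionHelpers
open PartitionDiagram

/-! ### The abelianization of `FreeZ2` -/

noncomputable def phi : FreeZ2 →* Multiplicative (DirectSum ℕ fun _ : ℕ => ZMod 2) :=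
  Monoid.CoprodI.lift fun i =>
    AddMonoidHom.toMultiplicative (DirectSum.of (fun _ : ℕ => ZMod 2) i)

theorem phi_gen (n : ℕ) :
    phi (_root_.gen n) = Multiplicative.ofAdd (DirectSum.of (fun _ : ℕ => ZMod 2) n 1) := by
  unfold phi _root_.gen
  rw [Monoid.CoprodI.lift_of]
  rfl

theorem zmod2_two_cases : ∀ m : Multiplicative (ZMod 2), m = 1 ∨ m = Multiplicative.ofAdd 1 := by
  decide

theorem gen_sq (n : ℕ) : _root_.gen n * _root_.gen n = 1 := by
  unfold _root_.gen
  rw [← MonoidHom.map_mul]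
  have : (Multiplicative.ofAdd (1 : ZMod 2)) * Multiplicative.ofAdd 1 = 1 := by decide
  rw [this, MonoidHom.map_one]

noncomputable def psiBase (i : ℕ) : ZMod 2 →+ Additive (Abelianization FreeZ2) :=
  ZMod.lift 2 ⟨zmultiplesHom _ (Additive.ofMul (Abelianization.of (_root_.gen i))), by
    show (2 : ℤ) • Additive.ofMul (Abelianization.of (_root_.gen i)) = 0
    have h2 : (2 : ℤ) • Additive.ofMul (Abelianization.of (_root_.gen i))
        = Additive.ofMul (Abelianization.of (_root_.gen i) * Abelianization.of (_root_.gen i)) := by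
      rw [two_zsmul]
      rfl
    rw [h2, ← MonoidHom.map_mul, gen_sq, MonoidHom.map_one]
    rfl⟩

noncomputable def psi : Multiplicative (DirectSum ℕ fun _ : ℕ => ZMod 2) →* Abelianization FreeZ2 :=
  AddMonoidHom.toMultiplicativeLeft (DirectSum.toAddMonoid psiBase)

theorem psi_ofAdd_of (i : ℕ) :
    psi (Multiplicative.ofAdd (DirectSum.of (fun _ : ℕ => ZMod 2) i 1))
      = Abelianization.of (_root_.gen i) := by
  show Additive.toMul ((DirectSum.toAddMonoid psiBase) (DirectSum.of (fun _ : ℕ => ZMod 2) i 1))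
    = Abelianization.of (_root_.gen i)
  rw [DirectSum.toAddMonoid_of]
  show Additive.toMul (psiBase i 1) = _
  have h1 : (1 : ZMod 2) = ((1 : ℤ) : ZMod 2) := by decide
  rw [show psiBase i 1 = (1:ℤ) • Additive.ofMul (Abelianization.of (_root_.gen i)) by
    unfold psiBase
    rw [h1, ZMod.lift_coe]
    rfl]
  rw [one_zsmul]
  rfl

theorem zmod2_cases : ∀ z : ZMod 2, z = 0 ∨ z = 1 := by decide

theorem psi_phi (g : FreeZ2) : psi (phi g) = Abelianization.of g := by
  refine Monoid.CoprodI.induction_on (M := fun _ : ℕ => Multiplicative (ZMod 2))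
    (motive := fun x => psi (phi x) = Abelianization.of x) g ?_ ?_ ?_
  · show psi (phi 1) = Abelianization.of 1
    rw [MonoidHom.map_one, MonoidHom.map_one, MonoidHom.map_one]
  · intro i m
    show psi (phi (Monoid.CoprodI.of (M := fun _ : ℕ => Multiplicative (ZMod 2)) (i := i) m))
      = Abelianization.of (Monoid.CoprodI.of (M := fun _ : ℕ => Multiplicative (ZMod 2)) (i := i) m)
    rcases zmod2_two_cases m with hm | hm
    · rw [hm, MonoidHom.map_one, MonoidHom.map_one, MonoidHom.map_one, MonoidHom.map_one]
    · rw [hm]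
      have hofgen : Monoid.CoprodI.of (M := fun _ : ℕ => Multiplicative (ZMod 2)) (i := i)
          (Multiplicative.ofAdd (1 : ZMod 2)) = _root_.gen i := rfl
      rw [hofgen, phi_gen, psi_ofAdd_of]
  · intro x y ihx ihy
    show psi (phi (x * y)) = Abelianization.of (x * y)
    rw [MonoidHom.map_mul, MonoidHom.map_mul, MonoidHom.map_mul, ihx, ihy]

noncomputable def phiAb : Abelianization FreeZ2 →* Multiplicative (DirectSum ℕ fun _ : ℕ => ZMod 2) :=
  Abelianization.lift phi

theorem psi_phiAb (x : Abelianization FreeZ2) : psi (phiAb x) = x := by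
  obtain ⟨g, rfl⟩ := QuotientGroup.mk_surjective x
  show psi (phiAb (Abelianization.of g)) = Abelianization.of g
  unfold phiAb
  rw [Abelianization.lift_apply_of]
  exact psi_phi g

theorem phiAb_psi (m : Multiplicative (DirectSum ℕ fun _ : ℕ => ZMod 2)) :
    phiAb (psi m) = m := by
  have key : ∀ v : DirectSum ℕ fun _ : ℕ => ZMod 2,
      phiAb (psi (Multiplicative.ofAdd v)) = Multiplicative.ofAdd v := by
    intro v
    induction v using DirectSum.induction_on with
    | zero =>
      show phiAb (psi 1) = 1
      rw [MonoidHom.map_one, MonoidHom.map_one]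
    | of i z =>
      rcases zmod2_cases z with hz | hz
      · subst hz
        rw [map_zero]
        show phiAb (psi 1) = 1
        rw [MonoidHom.map_one, MonoidHom.map_one]
      · subst hz
        rw [psi_ofAdd_of]
        unfold phiAb
        show (Abelianization.lift phi) (Abelianization.of (_root_.gen i)) = _
        rw [Abelianization.lift_apply_of, phi_gen]
    | add x y ihx ihy =>
      have : Multiplicative.ofAdd (x + y)
          = Multiplicative.ofAdd x * Multiplicative.ofAdd y := rfl
      rw [this, MonoidHom.map_mul, MonoidHom.map_mul, ihx, ihy]
  have := key (Multiplicative.toAdd m)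
  simpa using this

theorem ker_phi : ∀ g : FreeZ2, phi g = 1 ↔ g ∈ commutator FreeZ2 := by
  intro g
  constructor
  · intro hg
    have h1 : Abelianization.of g = 1 := by
      rw [← psi_phi g, hg, MonoidHom.map_one]
    exact (QuotientGroup.eq_one_iff g).mp h1
  · intro hg
    exact Abelianization.commutator_subset_ker phi hg

noncomputable def abIso : Abelianization FreeZ2 ≃* Multiplicative (DirectSum ℕ fun _ : ℕ => ZMod 2) :=
  MonoidHom.toMulEquiv phiAb psi
    (MonoidHom.ext fun x => psi_phiAb x)
    (MonoidHom.ext fun m => phiAb_psi m)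

end PartitionHelpers
namespace PartitionHelpers
open PartitionDiagram

theorem zmod2_v_add_self (v : DirectSum ℕ fun _ : ℕ => ZMod 2) : v + v = 0 := by
  have hz : ∀ z : ZMod 2, z + z = 0 := by decide
  refine DFinsupp.ext fun i => ?_
  rw [DirectSum.add_apply, DirectSum.zero_apply, hz]

theorem even_smul_zmod2 {c : ℕ} (hc : Even c) (v : DirectSum ℕ fun _ : ℕ => ZMod 2) :
    c • v = 0 := by
  obtain ⟨t, ht⟩ := hc
  rw [ht, add_nsmul, zmod2_v_add_self]

theorem phi_list (L : List ℕ) :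
    phi ((L.map _root_.gen).prod)
      = Multiplicative.ofAdd
          ((L.map (fun n => DirectSum.of (fun _ : ℕ => ZMod 2) n 1)).sum) := by
  induction L with
  | nil =>
    rw [List.map_nil, List.prod_nil, MonoidHom.map_one, List.map_nil, List.sum_nil]
    rfl
  | cons a L ih =>
    rw [List.map_cons, List.prod_cons, MonoidHom.map_mul, phi_gen, ih,
      List.map_cons, List.sum_cons]
    rfl

theorem sum_apply_count (L : List ℕ) (n : ℕ) :
    ((L.map (fun x => DirectSum.of (fun _ : ℕ => ZMod 2) x 1)).sum) n
      = ((L.count n : ℕ) : ZMod 2) := by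
  induction L with
  | nil =>
    rw [List.map_nil, List.sum_nil, DirectSum.zero_apply, List.count_nil]
    rfl
  | cons a L ih =>
    rw [List.map_cons, List.sum_cons, DirectSum.add_apply, ih]
    by_cases h : a = n
    · subst h
      rw [DirectSum.of_eq_same, List.count_cons_self]
      push_cast
      ring
    · rw [DirectSum.of_eq_of_ne _ _ _ (Ne.symm h), List.count_cons_of_ne h]
      ring

theorem exists_list (g : FreeZ2) : ∃ L : List ℕ, (L.map _root_.gen).prod = g := by
  refine Monoid.CoprodI.induction_on (M := fun _ : ℕ => Multiplicative (ZMod 2))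
    (motive := fun x => ∃ L : List ℕ, (L.map _root_.gen).prod = x) g ?_ ?_ ?_
  · exact ⟨[], by simp⟩
  · intro i m
    rcases zmod2_two_cases m with hm | hm
    · subst hm
      exact ⟨[], by simp⟩
    · subst hm
      exact ⟨[i], by simp [_root_.gen]⟩
  · rintro x y ⟨L1, rfl⟩ ⟨L2, rfl⟩
    exact ⟨L1 ++ L2, by rw [List.map_append, List.prod_append]⟩

theorem word_in_ker (p : PartitionDiagram) (hp : p ∈ gen)
    (lab : Fin p.upper ⊕ Fin p.lower → ℕ) (hlab : IsLabelling p lab) :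
    phi (wordOf p lab) = 1 := by
  have h0 : wordOf p lab = (((List.ofFn (fun j : Fin p.lower => lab (Sum.inr j)))
      ++ (List.ofFn (fun i : Fin p.upper => lab (Sum.inl i))).reverse).map _root_.gen).prod := by
    unfold wordOf
    rw [List.map_append, List.map_reverse, List.map_ofFn, List.map_ofFn]
    rfl
  rw [h0, phi_list]
  have hsum : (((List.ofFn (fun j : Fin p.lower => lab (Sum.inr j)))
      ++ (List.ofFn (fun i : Fin p.upper => lab (Sum.inl i))).reverse).map
        (fun n => DirectSum.of (fun _ : ℕ => ZMod 2) n 1)).sum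
      = ∑ x : Fin p.upper ⊕ Fin p.lower, DirectSum.of (fun _ : ℕ => ZMod 2) (lab x) 1 := by
    rw [List.map_append, List.sum_append, List.map_reverse, List.sum_reverse,
      List.map_ofFn, List.map_ofFn, List.sum_ofFn, List.sum_ofFn, Fintype.sum_sum_type]
    rw [add_comm]
    rfl
  rw [hsum]
  have hzero : ∑ x : Fin p.upper ⊕ Fin p.lower, DirectSum.of (fun _ : ℕ => ZMod 2) (lab x) 1
      = 0 := by
    rw [Finset.sum_comp (fun n => DirectSum.of (fun _ : ℕ => ZMod 2) n 1) lab]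
    refine Finset.sum_eq_zero ?_
    intro b hb
    obtain ⟨x₀, _, hx₀⟩ := Finset.mem_image.1 hb
    have hfil : Finset.univ.filter (fun a => lab a = b)
        = Finset.univ.filter (fun a => p.rel.r x₀ a) := by
      refine Finset.filter_congr ?_
      intro a _
      rw [← hx₀]
      constructor
      · intro h
        exact p.rel.symm' ((hlab a x₀).1 (h.trans rfl))
      · intro h
        exact (hlab a x₀).2 (p.rel.symm' h)
    rw [hfil]
    exact even_smul_zmod2 (gen_evenBlocks hp x₀) _
  rw [hzero]
  rfl

theorem counts_even_of_ker (L : List ℕ) (h : phi ((L.map _root_.gen).prod) = 1) :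
    ∀ n, Even (L.count n) := by
  intro n
  rw [phi_list] at h
  have hsum : (L.map (fun x => DirectSum.of (fun _ : ℕ => ZMod 2) x 1)).sum = 0 := by
    have := congrArg Multiplicative.toAdd h
    simpa [Function.comp_def] using this
  have hcnt : ((L.count n : ℕ) : ZMod 2) = 0 := by
    rw [← sum_apply_count L n, hsum, DirectSum.zero_apply]
  have hdvd : 2 ∣ L.count n := by
    rwa [ZMod.natCast_eq_zero_iff] at hcnt
  obtain ⟨c, hc⟩ := hdvd
  exact ⟨c, by omega⟩

theorem wordOf_wordPartition (L : List ℕ) :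
    wordOf (wordPartition L) (Sum.elim (fun i => (i : ℕ)) (fun j => L.get j))
      = (L.map _root_.gen).prod := by
  have h1 : wordOf (wordPartition L) (Sum.elim (fun i => (i : ℕ)) (fun j => L.get j))
      = (List.ofFn (fun j : Fin L.length => _root_.gen (L.get j)) ++ ([] : List FreeZ2)).prod :=
    rfl
  rw [h1, List.append_nil]
  have h2 : (fun j : Fin L.length => _root_.gen (L.get j)) = _root_.gen ∘ L.get := rfl
  rw [h2, ← List.map_ofFn, List.ofFn_get]

end PartitionHelpers

open PartitionHelpers in
theorem Fmap_generated_crossing_fourBlock' :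
    Fmap (generatedCategory {PartitionDiagram.crossing, PartitionDiagram.fourBlock}) =
      (commutator FreeZ2 : Set FreeZ2) ∧
    Nonempty ((FreeZ2 ⧸ commutator FreeZ2) ≃*
      Multiplicative (DirectSum ℕ fun _ : ℕ => ZMod 2)) := by
  constructor
  · ext g
    constructor
    · rintro ⟨p, hp, lab, hlab, rfl⟩
      rw [SetLike.mem_coe, ← ker_phi]
      exact word_in_ker p hp lab hlab
    · intro hg
      rw [SetLike.mem_coe] at hg
      obtain ⟨L, rfl⟩ := exists_list g
      have hphi : phi ((L.map _root_.gen).prod) = 1 := (ker_phi _).mpr hg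
      have hcounts := counts_even_of_ker L hphi
      exact ⟨wordPartition L, gen_of_even_counts L.length L le_rfl hcounts,
        Sum.elim (fun i => (i : ℕ)) (fun j => L.get j),
        fun x y => Iff.rfl, wordOf_wordPartition L⟩
  · exact ⟨abIso⟩
/-- For the category of partitions `C = ⟨⨯, ⊓⊓⟩` generated by the crossing
partition and the four block partition, `F(C)` equals the commutator subgroup of `Z_2^{*∞}`;
in particular `Z_2^{*∞}/F(C)` is isomorphic to the direct sum of countably many copies of
`Z_2`. -/
theorem Fmap_generated_crossing_fourBlock :
    Fmap (generatedCategory {PartitionDiagram.crossing, PartitionDiagram.fourBlock}) =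
      (commutator FreeZ2 : Set FreeZ2) ∧
    Nonempty ((FreeZ2 ⧸ commutator FreeZ2) ≃*
      Multiplicative (DirectSum ℕ fun _ : ℕ => ZMod 2)) :=
  Fmap_generated_crossing_fourBlock'
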